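/- Let R be an associative ring with local units, i.e. for every r ∈ R there exists an idempotent u ∈ R with u r = r u = r. If I and J are two-sided ideals of R with I ∩ J = {0} and I + J = R, then J = ann(I) and ann(ann(I)) = I; in particular, every complemented ideal in the lattice of two-sided ideals of R is an annihilator ideal. -/
import Mathlib


/-- The annihilator of a subset of a ring:
`ann(I) = {r ∈ R : r x = 0 and x r = 0 for all x ∈ I}`. -/
def annSet {R : Type*} [NonUnitalRing R] (I : Set R) : Set R :=
  {a | ∀ x ∈ I, a * x = 0 ∧ x * a = 0}

lemma complement_eq_ann {R : Type*} [NonUnitalRing R]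
    (hlu : ∀ x : R, ∃ u : R, u * u = u ∧ u * x = x ∧ x * u = x)
    (I J : TwoSidedIdeal R)
    (hmeet : (I : Set R) ∩ (J : Set R) = {0})
    (hjoin : ∀ x : R, ∃ a ∈ I, ∃ b ∈ J, x = a + b) :
    (J : Set R) = annSet (I : Set R) := by
  have hz : ∀ x : R, x ∈ I → x ∈ J → x = 0 := by
    intro x hI hJ
    have : x ∈ ((I : Set R) ∩ (J : Set R)) := ⟨hI, hJ⟩
    rw [hmeet] at this
    exact this
  ext r
  constructor
  · intro hr x hx
    constructor
    · exact hz _ (I.mul_mem_left _ _ hx) (J.mul_mem_right _ _ hr)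
    · exact hz _ (I.mul_mem_right _ _ hx) (J.mul_mem_left _ _ hr)
  · intro hr
    obtain ⟨a, ha, b, hb, rfl⟩ := hjoin r
    -- b annihilates I
    have hbann : ∀ x ∈ (I : Set R), b * x = 0 ∧ x * b = 0 := by
      intro x hx
      constructor
      · exact hz _ (I.mul_mem_left _ _ hx) (J.mul_mem_right _ _ hb)
      · exact hz _ (I.mul_mem_right _ _ hx) (J.mul_mem_left _ _ hb)
    -- hence a = (a+b) - b annihilates I
    have haann : ∀ x ∈ (I : Set R), a * x = 0 ∧ x * a = 0 := by
      intro x hx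
      have h1 := hr x hx
      have h2 := hbann x hx
      constructor
      · have : (a + b) * x = a * x + b * x := add_mul a b x
        rw [h1.1, h2.1, add_zero] at this
        exact this.symm
      · have : x * (a + b) = x * a + x * b := mul_add x a b
        rw [h1.2, h2.2, add_zero] at this
        exact this.symm
    -- a = 0 using a local unit
    obtain ⟨u, -, hua, -⟩ := hlu a
    obtain ⟨a', ha', b', hb', hu⟩ := hjoin u
    have h1 : a' * a = 0 := (haann a' ha').2
    have h2 : b' * a = 0 := by
      exact hz _ (I.mul_mem_left _ _ ha) (J.mul_mem_right _ _ hb')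
    have : a = 0 := by
      calc a = u * a := hua.symm
        _ = a' * a + b' * a := by rw [hu, add_mul]
        _ = 0 := by rw [h1, h2, add_zero]
    rw [this, zero_add]
    exact hb

/-- In a ring with local units, if two-sided ideals satisfy `I ∩ J = {0}` and
`I + J = R`, then `J = ann(I)` and `ann(ann(I)) = I`; in particular, every
complemented ideal in the lattice of two-sided ideals is an annihilator
ideal. -/
theorem complemented_ideal_is_annihilator {R : Type*} [NonUnitalRing R]
    (hlu : ∀ x : R, ∃ u : R, u * u = u ∧ u * x = x ∧ x * u = x)
    (I J : TwoSidedIdeal R)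
    (hmeet : (I : Set R) ∩ (J : Set R) = {0})
    (hjoin : ∀ x : R, ∃ a ∈ I, ∃ b ∈ J, x = a + b) :
    (J : Set R) = annSet (I : Set R) ∧
      annSet (annSet (I : Set R)) = (I : Set R) := by
  have hJ := complement_eq_ann hlu I J hmeet hjoin
  have hmeet' : (J : Set R) ∩ (I : Set R) = {0} := by rw [Set.inter_comm]; exact hmeet
  have hjoin' : ∀ x : R, ∃ a ∈ J, ∃ b ∈ I, x = a + b := by
    intro x
    obtain ⟨a, ha, b, hb, hx⟩ := hjoin x
    exact ⟨b, hb, a, ha, by rw [hx, add_comm]⟩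
  have hI := complement_eq_ann hlu J I hmeet' hjoin'
  exact ⟨hJ, by rw [← hJ, ← hI]⟩
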